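/- Let H be a separable infinite-dimensional complex Hilbert space and T : H → H a bounded linear operator. Then T satisfies the hypothesis of the Hypercyclicity Criterion if and only if there exists a strictly increasing sequence (n_k) of positive integers such that for every pair U, V of nonempty open subsets of H there is an index N ≥ 1 with T^{n_k}(U) ∩ V ≠ ∅ for every k ≥ N. -/

import Mathlib

open Metric Filter Topology

/-- `T` satisfies the hypothesis of the Hypercyclicity Criterion. -/
def SatisfiesHypercyclicityCriterion
    {H : Type*} [NormedAddCommGroup H] [InnerProductSpace ℂ H]
    (T : H →L[ℂ] H) : Prop :=
  ∃ (Y Z : Set H) (n : ℕ → ℕ) (S : ℕ → H → H),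
    Dense Y ∧ Dense Z ∧ StrictMono n ∧ (∀ k, 0 < n k) ∧
    (∀ y ∈ Y, Filter.Tendsto (fun k => (T ^ n k) y) Filter.atTop (nhds 0)) ∧
    (∀ z ∈ Z, Filter.Tendsto (fun k => S k z) Filter.atTop (nhds 0) ∧
      Filter.Tendsto (fun k => (T ^ n k) (S k z)) Filter.atTop (nhds z))

section AuxHC

variable {H : Type*} [NormedAddCommGroup H] [InnerProductSpace ℂ H]

private lemma hc_tool (T : H →L[ℂ] H) (n : ℕ → ℕ)
    (hyp : ∀ U V : Set H, IsOpen U → IsOpen V → U.Nonempty → V.Nonempty →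
      ∃ N : ℕ, 1 ≤ N ∧ ∀ k ≥ N, ((T ^ n k) '' U ∩ V).Nonempty)
    (c : H) (r : ℝ) (hr : 0 < r) (v : H) (ε : ℝ) (hε : 0 < ε) :
    ∃ N : ℕ, ∀ k ≥ N, ∃ u ∈ ball c r, ‖(T ^ n k) u - v‖ < ε := by
  obtain ⟨N, -, hN⟩ := hyp (ball c r) (ball v ε) isOpen_ball isOpen_ball
    (nonempty_ball.2 hr) (nonempty_ball.2 hε)
  refine ⟨N, fun k hk => ?_⟩
  obtain ⟨w, ⟨u, hu, rfl⟩, hwV⟩ := hN k hk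
  exact ⟨u, hu, by simpa [mem_ball, dist_eq_norm] using hwV⟩

private lemma hc_step (T : H →L[ℂ] H) (n : ℕ → ℕ)
    (hyp : ∀ U V : Set H, IsOpen U → IsOpen V → U.Nonempty → V.Nonempty →
      ∃ N : ℕ, 1 ≤ N ∧ ∀ k ≥ N, ((T ^ n k) '' U ∩ V).Nonempty)
    (k p : ℕ) (C : ℕ → H) (R : ℕ → ℝ) (hR : ∀ j, 0 < R j) :
    ∃ (p' : ℕ) (C' : ℕ → H) (R' : ℕ → ℝ),
      p < p' ∧ (∀ j, 0 < R' j) ∧ (∀ j, k < j → C' j = C j ∧ R' j = R j) ∧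
      ∀ j ≤ k, closedBall (C' j) (R' j) ⊆ ball (C j) (R j) ∧
        R' j ≤ (2:ℝ)⁻¹ ^ k ∧
        ∀ u ∈ closedBall (C' j) (R' j), ‖(T ^ n p') u‖ ≤ (2:ℝ)⁻¹ ^ k := by
  have hεk : (0:ℝ) < (2:ℝ)⁻¹ ^ k / 2 := by positivity
  have h1 : ∀ j, ∃ N, ∀ l ≥ N, ∃ u ∈ ball (C j) (R j),
      ‖(T ^ n l) u - 0‖ < (2:ℝ)⁻¹ ^ k / 2 :=
    fun j => hc_tool T n hyp (C j) (R j) (hR j) 0 _ hεk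
  choose N hN using h1
  set p' := max (p + 1) ((Finset.range (k + 1)).sup N) with hp'
  have hp'N : ∀ j ≤ k, N j ≤ p' := fun j hj =>
    le_max_of_le_right (Finset.le_sup (Finset.mem_range.2 (Nat.lt_succ_of_le hj)))
  have hsel : ∀ j, ∃ (u : H) (ρ : ℝ), 0 < ρ ∧ (k < j → u = C j ∧ ρ = R j) ∧
      (j ≤ k → closedBall u ρ ⊆ ball (C j) (R j) ∧ ρ ≤ (2:ℝ)⁻¹ ^ k ∧
        ∀ w ∈ closedBall u ρ, ‖(T ^ n p') w‖ ≤ (2:ℝ)⁻¹ ^ k) := by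
    intro j
    rcases le_or_gt j k with hj | hj
    · obtain ⟨u, hu, hTu⟩ := hN j p' (hp'N j hj)
      have hTu' : ‖(T ^ n p') u‖ < (2:ℝ)⁻¹ ^ k / 2 := by simpa using hTu
      set δ := R j - dist u (C j) with hδ
      have hδpos : 0 < δ := sub_pos.2 (mem_ball.1 hu)
      have hop : (0:ℝ) < ‖T ^ n p'‖ + 1 := by positivity
      set ρ := min (δ / 2) (min ((2:ℝ)⁻¹ ^ k) ((2:ℝ)⁻¹ ^ k / 2 / (‖T ^ n p'‖ + 1))) with hρ
      have hρpos : 0 < ρ := lt_min (by positivity) (lt_min (by positivity) (by positivity))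
      refine ⟨u, ρ, hρpos, fun h => absurd hj (not_le.2 h), fun _ => ⟨?_, ?_, ?_⟩⟩
      · intro w hw
        have htri : dist w (C j) ≤ dist w u + dist u (C j) := dist_triangle _ _ _
        have hwd : dist w u ≤ ρ := mem_closedBall.1 hw
        have hρδ : ρ ≤ δ / 2 := min_le_left _ _
        have : dist w (C j) < R j := by
          have := hδpos
          nlinarith
        exact mem_ball.2 this
      · exact (min_le_right _ _).trans (min_le_left _ _)
      · intro w hw
        have hsub : ‖(T ^ n p') w - (T ^ n p') u‖ ≤ ‖T ^ n p'‖ * ρ := by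
          rw [← map_sub]
          refine ((T ^ n p').le_opNorm _).trans ?_
          have : ‖w - u‖ ≤ ρ := by simpa [dist_eq_norm] using hw
          exact mul_le_mul_of_nonneg_left this (norm_nonneg _)
        have h2 : ‖T ^ n p'‖ * ρ ≤ (2:ℝ)⁻¹ ^ k / 2 := by
          have hρ2 : ρ ≤ (2:ℝ)⁻¹ ^ k / 2 / (‖T ^ n p'‖ + 1) :=
            (min_le_right _ _).trans (min_le_right _ _)
          have hnn : (0:ℝ) ≤ ‖T ^ n p'‖ := norm_nonneg _
          calc ‖T ^ n p'‖ * ρ ≤ (‖T ^ n p'‖ + 1) * ρ := by nlinarith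
            _ ≤ (‖T ^ n p'‖ + 1) * ((2:ℝ)⁻¹ ^ k / 2 / (‖T ^ n p'‖ + 1)) := by nlinarith
            _ = (2:ℝ)⁻¹ ^ k / 2 := by field_simp
        have htri : ‖(T ^ n p') w‖ ≤ ‖(T ^ n p') u‖ + ‖(T ^ n p') w - (T ^ n p') u‖ := by
          have h0 := norm_sub_norm_le ((T ^ n p') w) ((T ^ n p') u)
          linarith
        calc ‖(T ^ n p') w‖ ≤ ‖(T ^ n p') u‖ + ‖(T ^ n p') w - (T ^ n p') u‖ := htri
          _ ≤ (2:ℝ)⁻¹ ^ k / 2 + (2:ℝ)⁻¹ ^ k / 2 := add_le_add hTu'.le (hsub.trans h2)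
          _ = (2:ℝ)⁻¹ ^ k := by ring
    · exact ⟨C j, R j, hR j, fun _ => ⟨rfl, rfl⟩, fun h => absurd hj (not_lt.2 h)⟩
  choose C' R' hR'pos hgt hle using hsel
  exact ⟨p', C', R', lt_of_lt_of_le (Nat.lt_succ_self p) (le_max_left _ _),
    hR'pos, hgt, fun j hj => hle j hj⟩


private lemma hc_backward [CompleteSpace H] [TopologicalSpace.SeparableSpace H]
    (T : H →L[ℂ] H) (n : ℕ → ℕ) (hmono : StrictMono n) (hpos : ∀ k, 0 < n k)
    (hyp : ∀ U V : Set H, IsOpen U → IsOpen V → U.Nonempty → V.Nonempty →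
      ∃ N : ℕ, 1 ≤ N ∧ ∀ k ≥ N, ((T ^ n k) '' U ∩ V).Nonempty) :
    SatisfiesHypercyclicityCriterion T := by
  classical
  have hne : Nonempty H := ⟨0⟩
  obtain ⟨x', hx'⟩ := TopologicalSpace.exists_dense_seq H
  set x : ℕ → H := fun j => x' (Nat.unpair j).1 with hxdef
  -- the recursive construction of nested balls
  have F : ∀ (k : ℕ) (s : {s : ℕ × (ℕ → H) × (ℕ → ℝ) // ∀ j, 0 < s.2.2 j}),
      ∃ s' : {s : ℕ × (ℕ → H) × (ℕ → ℝ) // ∀ j, 0 < s.2.2 j},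
        s.1.1 < s'.1.1 ∧ (∀ j, k < j → s'.1.2.1 j = s.1.2.1 j ∧ s'.1.2.2 j = s.1.2.2 j) ∧
        ∀ j ≤ k, closedBall (s'.1.2.1 j) (s'.1.2.2 j) ⊆ ball (s.1.2.1 j) (s.1.2.2 j) ∧
          s'.1.2.2 j ≤ (2:ℝ)⁻¹ ^ k ∧
          ∀ u ∈ closedBall (s'.1.2.1 j) (s'.1.2.2 j), ‖(T ^ n s'.1.1) u‖ ≤ (2:ℝ)⁻¹ ^ k := by
    intro k s
    obtain ⟨p', C', R', h1, h2, h3, h4⟩ := hc_step T n hyp k s.1.1 s.1.2.1 s.1.2.2 s.2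
    exact ⟨⟨(p', C', R'), h2⟩, h1, h3, h4⟩
  choose Fn hFn using F
  have hr0 : ∀ j : ℕ, (0:ℝ) < ((j:ℝ) + 1)⁻¹ := fun j => by positivity
  set s0 : {s : ℕ × (ℕ → H) × (ℕ → ℝ) // ∀ j, 0 < s.2.2 j} :=
    ⟨(0, x, fun j => ((j:ℝ) + 1)⁻¹), fun j => hr0 j⟩ with hs0
  set g : ℕ → {s : ℕ × (ℕ → H) × (ℕ → ℝ) // ∀ j, 0 < s.2.2 j} :=
    fun k => Nat.rec s0 Fn k with hgdef
  have hgsucc : ∀ k, g (k + 1) = Fn k (g k) := fun k => rfl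
  have hg : ∀ k, (g k).1.1 < (g (k+1)).1.1 ∧
      (∀ j, k < j → (g (k+1)).1.2.1 j = (g k).1.2.1 j ∧ (g (k+1)).1.2.2 j = (g k).1.2.2 j) ∧
      ∀ j ≤ k, closedBall ((g (k+1)).1.2.1 j) ((g (k+1)).1.2.2 j) ⊆
          ball ((g k).1.2.1 j) ((g k).1.2.2 j) ∧
        (g (k+1)).1.2.2 j ≤ (2:ℝ)⁻¹ ^ k ∧
        ∀ u ∈ closedBall ((g (k+1)).1.2.1 j) ((g (k+1)).1.2.2 j),
          ‖(T ^ n (g (k+1)).1.1) u‖ ≤ (2:ℝ)⁻¹ ^ k := by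
    intro k
    rw [hgsucc k]
    exact hFn k (g k)
  have hseed : ∀ k j, k ≤ j → (g k).1.2.1 j = x j ∧ (g k).1.2.2 j = ((j:ℝ) + 1)⁻¹ := by
    intro k
    induction k with
    | zero => intro j _; exact ⟨rfl, rfl⟩
    | succ k ih =>
      intro j hj
      have hlt : k < j := Nat.lt_of_succ_le hj
      obtain ⟨e1, e2⟩ := (hg k).2.1 j hlt
      obtain ⟨f1, f2⟩ := ih j hlt.le
      exact ⟨e1.trans f1, e2.trans f2⟩
  set φ : ℕ → ℕ := fun k => (g (k+1)).1.1 with hφdef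
  set c : ℕ → ℕ → H := fun j k => (g (k+1)).1.2.1 j with hcdef
  set r : ℕ → ℕ → ℝ := fun j k => (g (k+1)).1.2.2 j with hrdef
  have rpos : ∀ j k, 0 < r j k := fun j k => (g (k+1)).2 j
  have hφmono : StrictMono φ := strictMono_nat_of_lt_succ (fun k => (hg (k+1)).1)
  have hnest : ∀ j k, j ≤ k + 1 → closedBall (c j (k+1)) (r j (k+1)) ⊆ ball (c j k) (r j k) :=
    fun j k hj => ((hg (k+1)).2.2 j hj).1
  have hrad : ∀ j k, j ≤ k → r j k ≤ (2:ℝ)⁻¹ ^ k := by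
    intro j k hj
    have := ((hg k).2.2 j hj).2.1
    exact this
  have hsmall : ∀ j k, j ≤ k → ∀ u ∈ closedBall (c j k) (r j k),
      ‖(T ^ n (φ k)) u‖ ≤ (2:ℝ)⁻¹ ^ k := by
    intro j k hj
    exact ((hg k).2.2 j hj).2.2
  have hfirst : ∀ j, closedBall (c j j) (r j j) ⊆ ball (x j) (((j:ℝ) + 1)⁻¹) := by
    intro j
    have h := ((hg j).2.2 j le_rfl).1
    obtain ⟨e1, e2⟩ := hseed j j le_rfl
    rwa [e1, e2] at h
  have hCB : ∀ j k, j ≤ k → ∀ l, k ≤ l →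
      closedBall (c j l) (r j l) ⊆ closedBall (c j k) (r j k) := by
    intro j k hjk l hl
    induction l, hl using Nat.le_induction with
    | base => exact subset_rfl
    | succ l hkl ih =>
      refine subset_trans ?_ ih
      exact (hnest j l (le_trans hjk (le_trans hkl (Nat.le_succ l)))).trans ball_subset_closedBall
  have hY : ∀ j, ∃ yj : H, dist yj (x j) < ((j:ℝ) + 1)⁻¹ ∧
      ∀ k, j ≤ k → ‖(T ^ n (φ k)) yj‖ ≤ (2:ℝ)⁻¹ ^ k := by
    intro j
    have hcauchy : CauchySeq (fun k => c j k) := by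
      rw [Metric.cauchySeq_iff']
      intro ε hε
      obtain ⟨K, hK⟩ := exists_pow_lt_of_lt_one hε (by norm_num : (2:ℝ)⁻¹ < 1)
      refine ⟨max j K, fun l hl => ?_⟩
      have h1 : c j l ∈ closedBall (c j (max j K)) (r j (max j K)) :=
        hCB j (max j K) (le_max_left _ _) l hl (mem_closedBall_self (rpos j l).le)
      have h2 : r j (max j K) ≤ (2:ℝ)⁻¹ ^ (max j K) := hrad j (max j K) (le_max_left _ _)
      have h3 : ((2:ℝ)⁻¹) ^ (max j K) ≤ (2:ℝ)⁻¹ ^ K :=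
        pow_le_pow_of_le_one (by norm_num) (by norm_num) (le_max_right _ _)
      calc dist (c j l) (c j (max j K)) ≤ r j (max j K) := mem_closedBall.1 h1
        _ ≤ (2:ℝ)⁻¹ ^ K := h2.trans h3
        _ < ε := hK
    obtain ⟨yj, hyj⟩ := cauchySeq_tendsto_of_complete hcauchy
    have hmem : ∀ k, j ≤ k → yj ∈ closedBall (c j k) (r j k) := by
      intro k hk
      refine isClosed_closedBall.mem_of_tendsto hyj ?_
      filter_upwards [eventually_ge_atTop k] with l hl
      exact hCB j k hk l hl (mem_closedBall_self (rpos j l).le)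
    exact ⟨yj, mem_ball.1 (hfirst j (hmem j le_rfl)),
      fun k hk => hsmall j k hk yj (hmem k hk)⟩
  choose y hy1 hy2 using hY
  set m : ℕ → ℕ := fun k => n (φ k) with hmdef
  have hm_mono : StrictMono m := hmono.comp hφmono
  have hm_pos : ∀ k, 0 < m k := fun k => hpos (φ k)
  have hyp_m : ∀ U V : Set H, IsOpen U → IsOpen V → U.Nonempty → V.Nonempty →
      ∃ N : ℕ, 1 ≤ N ∧ ∀ k ≥ N, ((T ^ m k) '' U ∩ V).Nonempty := by
    intro U V hU hV hUne hVne
    obtain ⟨N, hN1, hN⟩ := hyp U V hU hV hUne hVne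
    exact ⟨N, hN1, fun k hk => hN (φ k) (le_trans hk hφmono.le_apply)⟩
  -- construction of the maps S
  have hS : ∀ z : H, ∃ S : ℕ → H, Tendsto S atTop (nhds 0) ∧
      Tendsto (fun k => (T ^ m k) (S k)) atTop (nhds z) := by
    intro z
    have hP : ∀ q : ℕ, ∃ N, ∀ k ≥ N, ∃ u : H,
        ‖u‖ < ((q:ℝ) + 1)⁻¹ ∧ ‖(T ^ m k) u - z‖ < ((q:ℝ) + 1)⁻¹ := by
      intro q
      have hq : (0:ℝ) < ((q:ℝ) + 1)⁻¹ := by positivity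
      obtain ⟨N, -, hN⟩ := hyp_m (ball 0 (((q:ℝ) + 1)⁻¹)) (ball z (((q:ℝ) + 1)⁻¹))
        isOpen_ball isOpen_ball (nonempty_ball.2 hq) (nonempty_ball.2 hq)
      refine ⟨N, fun k hk => ?_⟩
      obtain ⟨w, ⟨u, hu, rfl⟩, hw⟩ := hN k hk
      exact ⟨u, mem_ball_zero_iff.1 hu, by simpa [mem_ball, dist_eq_norm] using hw⟩
    choose N hN using hP
    set M : ℕ → ℕ := fun q => (Finset.range (q+1)).sup N with hMdef
    set jf : ℕ → ℕ := fun k => Nat.findGreatest (fun q => M q ≤ k) k with hjfdef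
    have hMself : ∀ q, N q ≤ M q := fun q =>
      Finset.le_sup (Finset.mem_range.2 (Nat.lt_succ_self q))
    have hkey : ∀ q k, q ≤ k → M q ≤ k → q ≤ jf k ∧ ∃ u : H,
        ‖u‖ < ((jf k : ℝ) + 1)⁻¹ ∧ ‖(T ^ m k) u - z‖ < ((jf k : ℝ) + 1)⁻¹ := by
      intro q k hqk hMk
      have h1 : q ≤ jf k := Nat.le_findGreatest hqk hMk
      have h2 : M (jf k) ≤ k := Nat.findGreatest_spec (P := fun q => M q ≤ k) (m := q) hqk hMk
      exact ⟨h1, hN (jf k) k (le_trans (hMself _) h2)⟩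
    set S : ℕ → H := fun k => if h : ∃ u : H,
        ‖u‖ < ((jf k : ℝ) + 1)⁻¹ ∧ ‖(T ^ m k) u - z‖ < ((jf k : ℝ) + 1)⁻¹
      then h.choose else 0 with hSdef
    have hSgood : ∀ q k, q ≤ k → M q ≤ k →
        ‖S k‖ < ((q:ℝ) + 1)⁻¹ ∧ ‖(T ^ m k) (S k) - z‖ < ((q:ℝ) + 1)⁻¹ := by
      intro q k hqk hMk
      obtain ⟨hq, hex⟩ := hkey q k hqk hMk
      have hmono' : ((jf k : ℝ) + 1)⁻¹ ≤ ((q:ℝ) + 1)⁻¹ := by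
        have : ((q:ℝ) + 1) ≤ ((jf k : ℝ) + 1) := by
          have := (Nat.cast_le (α := ℝ)).2 hq
          linarith
        exact inv_anti₀ (by positivity) this
      have hspec := hex.choose_spec
      have hSk : S k = hex.choose := by rw [hSdef]; exact dif_pos hex
      rw [hSk]
      exact ⟨lt_of_lt_of_le hspec.1 hmono', lt_of_lt_of_le hspec.2 hmono'⟩
    have haux : ∀ ε : ℝ, 0 < ε → ∃ K : ℕ, ∀ k ≥ K,
        ‖S k‖ < ε ∧ ‖(T ^ m k) (S k) - z‖ < ε := by
      intro ε hε
      obtain ⟨q, hq⟩ := exists_nat_one_div_lt hε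
      have hq' : ((q:ℝ) + 1)⁻¹ < ε := by rwa [one_div] at hq
      refine ⟨max q (M q), fun k hk => ?_⟩
      obtain ⟨h1, h2⟩ := hSgood q k (le_trans (le_max_left _ _) hk)
        (le_trans (le_max_right _ _) hk)
      exact ⟨h1.trans hq', h2.trans hq'⟩
    refine ⟨S, ?_, ?_⟩
    · rw [Metric.tendsto_atTop]
      intro ε hε
      obtain ⟨K, hK⟩ := haux ε hε
      exact ⟨K, fun k hk => by simpa [dist_eq_norm] using (hK k hk).1⟩
    · rw [Metric.tendsto_atTop]
      intro ε hε
      obtain ⟨K, hK⟩ := haux ε hε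
      exact ⟨K, fun k hk => by simpa [dist_eq_norm] using (hK k hk).2⟩
  choose Sfun hS1 hS2 using hS
  refine ⟨Set.range y, Set.univ, m, fun k z => Sfun z k, ?_, dense_univ, hm_mono, hm_pos, ?_, ?_⟩
  · -- density of range y
    rw [Metric.dense_iff]
    intro w ρ hρ
    obtain ⟨K, hK⟩ := exists_nat_one_div_lt (half_pos hρ)
    have hK' : ((K:ℝ) + 1)⁻¹ < ρ / 2 := by rwa [one_div] at hK
    obtain ⟨j₀, hj₀⟩ := hx'.exists_dist_lt w (half_pos hρ)
    set j := Nat.pair j₀ K with hjdef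
    have hxj : x j = x' j₀ := by simp [hxdef, hjdef, Nat.unpair_pair]
    have hjK : K ≤ j := Nat.right_le_pair _ _
    have hinv : ((j:ℝ) + 1)⁻¹ ≤ ((K:ℝ) + 1)⁻¹ := by
      have : ((K:ℝ) + 1) ≤ ((j:ℝ) + 1) := by
        have := (Nat.cast_le (α := ℝ)).2 hjK
        linarith
      exact inv_anti₀ (by positivity) this
    refine ⟨y j, mem_ball.2 ?_, Set.mem_range_self j⟩
    have h1 : dist (y j) (x j) < ((j:ℝ) + 1)⁻¹ := hy1 j
    have h2 : dist (x j) w < ρ / 2 := by rw [hxj, dist_comm]; exact hj₀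
    calc dist (y j) w ≤ dist (y j) (x j) + dist (x j) w := dist_triangle _ _ _
      _ < ((j:ℝ) + 1)⁻¹ + ρ / 2 := by linarith
      _ ≤ ((K:ℝ) + 1)⁻¹ + ρ / 2 := by linarith
      _ < ρ := by linarith
  · rintro _ ⟨j, rfl⟩
    refine squeeze_zero_norm' ?_ (tendsto_pow_atTop_nhds_zero_of_lt_one (by norm_num) (by norm_num : (2:ℝ)⁻¹ < 1))
    filter_upwards [eventually_ge_atTop j] with k hk using hy2 j k hk
  · intro z _
    exact ⟨hS1 z, hS2 z⟩

end AuxHC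

/-- Proposition 2.12, (i) ⇔ (iii). -/
theorem criterion_iff_eventually_transitive
    {H : Type*} [NormedAddCommGroup H] [InnerProductSpace ℂ H]
    [CompleteSpace H] [TopologicalSpace.SeparableSpace H]
    (hdim : ¬ FiniteDimensional ℂ H)
    (T : H →L[ℂ] H) :
    SatisfiesHypercyclicityCriterion T ↔
    ∃ n : ℕ → ℕ, StrictMono n ∧ (∀ k, 0 < n k) ∧
      ∀ U V : Set H, IsOpen U → IsOpen V → U.Nonempty → V.Nonempty →
        ∃ N : ℕ, 1 ≤ N ∧ ∀ k ≥ N, ((T ^ n k) '' U ∩ V).Nonempty := by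
  constructor
  · rintro ⟨Y, Z, nn, S, hY, hZ, hmono, hpos, hTy, hTz⟩
    refine ⟨nn, hmono, hpos, fun U V hU hV hUne hVne => ?_⟩
    obtain ⟨y, hyY, hyU⟩ := hY.exists_mem_open hU hUne
    obtain ⟨z, hzZ, hzV⟩ := hZ.exists_mem_open hV hVne
    have h1 : Filter.Tendsto (fun k => y + S k z) Filter.atTop (nhds y) := by
      simpa using tendsto_const_nhds.add (hTz z hzZ).1
    have h2 : Filter.Tendsto (fun k => (T ^ nn k) (y + S k z)) Filter.atTop (nhds z) := by
      have := (hTy y hyY).add (hTz z hzZ).2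
      simpa [map_add] using this
    have h3 : ∀ᶠ k in Filter.atTop, y + S k z ∈ U :=
      h1.eventually_mem (hU.mem_nhds hyU)
    have h4 : ∀ᶠ k in Filter.atTop, (T ^ nn k) (y + S k z) ∈ V :=
      h2.eventually_mem (hV.mem_nhds hzV)
    obtain ⟨N0, hN0⟩ := Filter.eventually_atTop.1 (h3.and h4)
    refine ⟨max N0 1, le_max_right _ _, fun k hk => ?_⟩
    have hk0 : N0 ≤ k := le_trans (le_max_left _ _) hk
    exact ⟨(T ^ nn k) (y + S k z), ⟨y + S k z, (hN0 k hk0).1, rfl⟩, (hN0 k hk0).2⟩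
  · rintro ⟨n, hmono, hpos, hyp⟩
    exact hc_backward T n hmono hpos hyp
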